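/- Suppose ‖P_T P_Ω‖ ≤ 1/2. Then for any pair H of real n×n matrices, writing H^{Γ⊥} = P_{Γ⊥}(H) (so that P_Γ(H^{Γ⊥}) = 0), one has ‖(P_T × P_Ω)(H^{Γ⊥})‖_F² ≤ 4·‖(P_{T⊥} × P_{Ω⊥})(H^{Γ⊥})‖_F², and consequently ‖H^{Γ⊥}‖_F² ≤ 5·‖(P_{T⊥} × P_{Ω⊥})(H^{Γ⊥})‖_F². -/

import Mathlib

open Matrix BigOperators

noncomputable def frobNorm {m k : ℕ} (A : Matrix (Fin m) (Fin k) ℝ) : ℝ :=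
  Real.sqrt (∑ i, ∑ j, (A i j) ^ 2)

noncomputable def nuclearNorm {m k : ℕ} (A : Matrix (Fin m) (Fin k) ℝ) : ℝ :=
  ∑ i, Real.sqrt ((show (Aᵀ * A).IsHermitian by simpa [Matrix.conjTranspose_eq_transpose_of_trivial] using Matrix.isHermitian_conjTranspose_mul_self A).eigenvalues i)

def l1Norm {m k : ℕ} (A : Matrix (Fin m) (Fin k) ℝ) : ℝ :=
  ∑ i, ∑ j, |A i j|

noncomputable def linfNorm {m k : ℕ} (A : Matrix (Fin m) (Fin k) ℝ) : ℝ :=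
  ⨆ i, ⨆ j, |A i j|

noncomputable def specNorm {m k : ℕ} (A : Matrix (Fin m) (Fin k) ℝ) : ℝ :=
  ‖LinearMap.toContinuousLinearMap (Matrix.toEuclideanLin A)‖

def finner {m k : ℕ} (A B : Matrix (Fin m) (Fin k) ℝ) : ℝ :=
  ∑ i, ∑ j, A i j * B i j

noncomputable def projSet {n : ℕ} (Ω : Set (Fin n × Fin n)) (S : Matrix (Fin n) (Fin n) ℝ) :
    Matrix (Fin n) (Fin n) ℝ :=
  fun i j => Ω.indicator (fun p => S p.1 p.2) (i, j)

def suppSet {n : ℕ} (S : Matrix (Fin n) (Fin n) ℝ) : Set (Fin n × Fin n) :=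
  {p | S p.1 p.2 ≠ 0}

noncomputable def sgnMat {n : ℕ} (S : Matrix (Fin n) (Fin n) ℝ) : Matrix (Fin n) (Fin n) ℝ :=
  fun i j => Real.sign (S i j)

def Tspace {n r : ℕ} (U V : Matrix (Fin n) (Fin r) ℝ) : Set (Matrix (Fin n) (Fin n) ℝ) :=
  {X | ∃ Q R : Matrix (Fin n) (Fin r) ℝ, X = U * Qᵀ + R * Vᵀ}

def IsOrthProjOnto {n : ℕ} (P : Matrix (Fin n) (Fin n) ℝ →ₗ[ℝ] Matrix (Fin n) (Fin n) ℝ)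
    (T : Set (Matrix (Fin n) (Fin n) ℝ)) : Prop :=
  (∀ X, P X ∈ T) ∧ (∀ X ∈ T, P X = X) ∧ (∀ X Y, Y ∈ T → finner (X - P X) Y = 0)

noncomputable def pairFrob {n : ℕ} (X : Matrix (Fin n) (Fin n) ℝ × Matrix (Fin n) (Fin n) ℝ) : ℝ :=
  Real.sqrt (frobNorm X.1 ^ 2 + frobNorm X.2 ^ 2)

noncomputable def projGamma {n : ℕ} (X : Matrix (Fin n) (Fin n) ℝ × Matrix (Fin n) (Fin n) ℝ) :
    Matrix (Fin n) (Fin n) ℝ × Matrix (Fin n) (Fin n) ℝ :=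
  ((1/2 : ℝ) • (X.1 + X.2), (1/2 : ℝ) • (X.1 + X.2))

open scoped Classical

noncomputable def suppFinset {n : ℕ} (S : Matrix (Fin n) (Fin n) ℝ) : Finset (Fin n × Fin n) :=
  Finset.univ.filter (fun p => S p.1 p.2 ≠ 0)

section lems
variable {m k : ℕ} (A B C : Matrix (Fin m) (Fin k) ℝ)

lemma finner_self_nonneg : 0 ≤ finner A A :=
  Finset.sum_nonneg fun _ _ => Finset.sum_nonneg fun _ _ => mul_self_nonneg _

lemma frob_sq : frobNorm A ^ 2 = finner A A := by
  rw [frobNorm, Real.sq_sqrt]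
  · simp [finner, sq]
  · exact Finset.sum_nonneg fun _ _ => Finset.sum_nonneg fun _ _ => sq_nonneg _

lemma finner_comm : finner A B = finner B A := by
  simp [finner, mul_comm]

lemma finner_sub_sub : finner (A - B) (A - B)
    = finner A A - 2 * finner A B + finner B B := by
  simp only [finner, Matrix.sub_apply, Finset.mul_sum, ← Finset.sum_add_distrib,
    ← Finset.sum_sub_distrib]
  exact Finset.sum_congr rfl fun i _ => Finset.sum_congr rfl fun j _ => by ring

lemma finner_add_add : finner (A + B) (A + B)
    = finner A A + 2 * finner A B + finner B B := by
  simp only [finner, Matrix.add_apply, Finset.mul_sum, ← Finset.sum_add_distrib,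
    ← Finset.sum_sub_distrib]
  exact Finset.sum_congr rfl fun i _ => Finset.sum_congr rfl fun j _ => by ring

lemma finner_sub_right : finner A (B - C) = finner A B - finner A C := by
  simp only [finner, Matrix.sub_apply, ← Finset.sum_sub_distrib]
  exact Finset.sum_congr rfl fun i _ => Finset.sum_congr rfl fun j _ => by ring

lemma finner_cs : finner A B ≤ frobNorm A * frobNorm B := by
  have h := Finset.sum_mul_sq_le_sq_mul_sq Finset.univ
    (fun p : Fin m × Fin k => A p.1 p.2) (fun p => B p.1 p.2)
  have h1 : finner A B = ∑ p : Fin m × Fin k, A p.1 p.2 * B p.1 p.2 := by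
    rw [finner, ← Finset.univ_product_univ, Finset.sum_product]
  have h2 : frobNorm A = Real.sqrt (∑ p : Fin m × Fin k, (A p.1 p.2) ^ 2) := by
    rw [frobNorm, ← Finset.univ_product_univ, Finset.sum_product]
  have h3 : frobNorm B = Real.sqrt (∑ p : Fin m × Fin k, (B p.1 p.2) ^ 2) := by
    rw [frobNorm, ← Finset.univ_product_univ, Finset.sum_product]
  rw [h1, h2, h3, ← Real.sqrt_mul (Finset.sum_nonneg fun _ _ => sq_nonneg _)]
  calc ∑ p : Fin m × Fin k, A p.1 p.2 * B p.1 p.2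
      ≤ |∑ p : Fin m × Fin k, A p.1 p.2 * B p.1 p.2| := le_abs_self _
    _ = Real.sqrt ((∑ p : Fin m × Fin k, A p.1 p.2 * B p.1 p.2) ^ 2) := by
        rw [Real.sqrt_sq_eq_abs]
    _ ≤ _ := Real.sqrt_le_sqrt h

end lems

section projlems
variable {n : ℕ} (Ω : Set (Fin n × Fin n)) (A B : Matrix (Fin n) (Fin n) ℝ)

lemma projSet_idem : projSet Ω (projSet Ω A) = projSet Ω A := by
  funext i j
  by_cases h : (i, j) ∈ Ω <;> simp [projSet, Set.indicator, h]

lemma projSet_neg : projSet Ω (-A) = - projSet Ω A := by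
  funext i j
  by_cases h : (i, j) ∈ Ω <;> simp [projSet, Set.indicator, h]

lemma projSet_orth : finner (A - projSet Ω A) (projSet Ω B) = 0 := by
  apply Finset.sum_eq_zero; intro i _; apply Finset.sum_eq_zero; intro j _
  by_cases h : (i, j) ∈ Ω <;> simp [projSet, Set.indicator, h]

end projlems


lemma frob_neg {m k : ℕ} (A : Matrix (Fin m) (Fin k) ℝ) : frobNorm (-A) = frobNorm A := by
  simp [frobNorm, Matrix.neg_apply]

lemma pairFrob_sq {n : ℕ} (X : Matrix (Fin n) (Fin n) ℝ × Matrix (Fin n) (Fin n) ℝ) :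
    pairFrob X ^ 2 = frobNorm X.1 ^ 2 + frobNorm X.2 ^ 2 :=
  Real.sq_sqrt (add_nonneg (sq_nonneg _) (sq_nonneg _))

/-- If ‖P_T P_Ω‖ ≤ 1/2, then for any pair H, with H^{Γ⊥} = P_{Γ⊥}(H) = H − P_Γ(H),
‖(P_T × P_Ω)(H^{Γ⊥})‖_F² ≤ 4‖(P_{T⊥} × P_{Ω⊥})(H^{Γ⊥})‖_F², and consequently
‖H^{Γ⊥}‖_F² ≤ 5‖(P_{T⊥} × P_{Ω⊥})(H^{Γ⊥})‖_F². -/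
theorem stmt9 {n : ℕ} (T : Submodule ℝ (Matrix (Fin n) (Fin n) ℝ))
    (PT : Matrix (Fin n) (Fin n) ℝ →ₗ[ℝ] Matrix (Fin n) (Fin n) ℝ)
    (hPT : IsOrthProjOnto PT (T : Set (Matrix (Fin n) (Fin n) ℝ)))
    (Ω : Set (Fin n × Fin n))
    -- ‖P_T P_Ω‖ ≤ 1/2
    (hop : ∀ X : Matrix (Fin n) (Fin n) ℝ, frobNorm (PT (projSet Ω X)) ≤ (1 / 2) * frobNorm X)
    (H HΓp : Matrix (Fin n) (Fin n) ℝ × Matrix (Fin n) (Fin n) ℝ)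
    (hHΓp : HΓp = H - projGamma H) :
    pairFrob (PT HΓp.1, projSet Ω HΓp.2) ^ 2 ≤
        4 * pairFrob (HΓp.1 - PT HΓp.1, HΓp.2 - projSet Ω HΓp.2) ^ 2 ∧
      pairFrob HΓp ^ 2 ≤ 5 * pairFrob (HΓp.1 - PT HΓp.1, HΓp.2 - projSet Ω HΓp.2) ^ 2 := by
  -- HΓp.2 = -HΓp.1
  set Q : Matrix (Fin n) (Fin n) ℝ := HΓp.1 with hQ
  have hneg : HΓp.2 = -Q := by
    rw [hQ, hHΓp]
    funext i j
    simp only [projGamma, Prod.snd_sub, Prod.fst_sub, Matrix.sub_apply, Matrix.smul_apply,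
      Matrix.add_apply, Matrix.neg_apply, smul_eq_mul]
    ring
  set a : Matrix (Fin n) (Fin n) ℝ := PT Q with ha
  set b : Matrix (Fin n) (Fin n) ℝ := projSet Ω Q with hb
  set dT : Matrix (Fin n) (Fin n) ℝ := Q - a with hdT
  set dΩ : Matrix (Fin n) (Fin n) ℝ := Q - b with hdΩ
  have hb2 : projSet Ω HΓp.2 = -b := by rw [hneg, projSet_neg, hb]
  have hd2 : HΓp.2 - projSet Ω HΓp.2 = -dΩ := by
    rw [hneg, projSet_neg, hdΩ, hb]; abel
  -- orthogonality facts
  have horthT : finner dT a = 0 := hPT.2.2 Q a (hPT.1 Q)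
  have horthΩ : finner dΩ b = 0 := projSet_orth Ω Q Q
  -- Pythagoras
  have hpyT : finner Q Q = finner a a + finner dT dT := by
    have : Q = a + dT := by rw [hdT]; abel
    rw [this, finner_add_add]
    rw [finner_comm a dT, horthT]; ring
  have hpyΩ : finner Q Q = finner b b + finner dΩ dΩ := by
    have : Q = b + dΩ := by rw [hdΩ]; abel
    rw [this, finner_add_add]
    rw [finner_comm b dΩ, horthΩ]; ring
  -- cross term bound : finner a b ≤ (1/2) * frobNorm a * frobNorm b
  have hPTb : PT b = PT (projSet Ω b) := by rw [hb, projSet_idem]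
  have hopb : frobNorm (PT b) ≤ (1/2) * frobNorm b := by rw [hPTb]; exact hop b
  have hbPTb : finner a (b - PT b) = 0 := by
    rw [finner_comm]; exact hPT.2.2 b a (hPT.1 Q)
  have hcross : finner a b ≤ (1/2) * frobNorm a * frobNorm b := by
    have h1 : finner a b = finner a (PT b) := by
      have := finner_sub_right a b (PT b)
      linarith [hbPTb, this]
    have h2 : finner a (PT b) ≤ frobNorm a * frobNorm (PT b) := finner_cs a (PT b)
    have h3 : frobNorm a * frobNorm (PT b) ≤ frobNorm a * ((1/2) * frobNorm b) :=
      mul_le_mul_of_nonneg_left hopb (Real.sqrt_nonneg _)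
    rw [h1]; linarith
  have hab : finner a b ≤ (1/4) * (finner a a + finner b b) := by
    have h4 : frobNorm a * frobNorm b ≤ (1/2) * (frobNorm a ^ 2 + frobNorm b ^ 2) := by
      nlinarith [sq_nonneg (frobNorm a - frobNorm b)]
    rw [← frob_sq, ← frob_sq]
    nlinarith
  -- ‖a-b‖² ≤ 2‖dT‖² + 2‖dΩ‖²
  have hab2 : a - b = dΩ - dT := by rw [hdΩ, hdT]; abel
  have hsq : finner (a - b) (a - b) ≤ 2 * finner dT dT + 2 * finner dΩ dΩ := by
    rw [hab2, finner_sub_sub]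
    have := finner_self_nonneg (dΩ + dT)
    rw [finner_add_add] at this
    linarith
  have hexp : finner a a + finner b b
      = finner (a - b) (a - b) + 2 * finner a b := by
    rw [finner_sub_sub]; ring
  have hmain : finner a a + finner b b ≤ 4 * (finner dT dT + finner dΩ dΩ) := by
    have haabb : finner a a + finner b b ≤ 2 * finner dT dT + 2 * finner dΩ dΩ
        + (1/2) * (finner a a + finner b b) := by linarith
    linarith
  constructor
  · rw [pairFrob_sq, pairFrob_sq]
    simp only [hd2]
    simp only [hb2, frob_neg]
    simp only [frob_sq]
    linarith
  · rw [pairFrob_sq, pairFrob_sq]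
    simp only [hd2]
    simp only [← hQ, hneg, frob_neg]
    simp only [frob_sq]
    linarith
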